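/- Let α, β ∈ 2^ℕ be not E₀*-equivalent, and suppose γ : [0,1] → ℝ² is a continuous map with image contained in the Knaster continuum H, γ(0) = ψ(α) and γ(1) = ψ(β). Then the set {k ∈ ℕ : γ([0,1]) ∩ Hₖ ≠ ∅} is infinite. -/

import Mathlib

/-- The Cantor space `2^ℕ`. -/
abbrev Cantor : Type := ℕ → Fin 2

/-- Eventual equality `E₀` on `2^ℕ`. -/
def E0 (α β : Cantor) : Prop := ∃ m : ℕ, ∀ n ≥ m, α n = β n

/-- Pointwise complement of a binary sequence. -/
def cmpl (α : Cantor) : Cantor := fun n => 1 - α n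

/-- The relation `E₀*`: `α E₀* β` iff `α E₀ β` or `α E₀ β̄`. -/
def E0star (α β : Cantor) : Prop := E0 α β ∨ E0 α (cmpl β)

/-- The relation `Fₙ`: agreement from coordinate `n` onwards. -/
def Frel (n : ℕ) (α β : Cantor) : Prop := ∀ i ≥ n, α i = β i

/-- The pieces `Hₖ` of the Knaster continuum. -/
def Hset (k : ℕ) : Set (ℝ × ℝ) :=
  if k = 0 then
    {p | 0 ≤ p.2 ∧ ∃ c ∈ cantorSet, (p.1 - 1/2)^2 + p.2^2 = (c - 1/2)^2}
  else
    {p | p.2 ≤ 0 ∧ ∃ c ∈ cantorSet ∩ Set.Icc ((2:ℝ)/3^k) (3/3^k),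
      (p.1 - 5/(2*3^k))^2 + p.2^2 = (c - 5/(2*3^k))^2}

/-- The Knaster continuum (buckethandle). -/
def knasterH : Set (ℝ × ℝ) := ⋃ k : ℕ, Hset k

/-- The map `ψ : 2^ℕ → ℝ²` sending `α` to the corresponding Cantor set point on the x-axis. -/
noncomputable def psi (α : Cantor) : ℝ × ℝ := (∑' i : ℕ, 2 * (α i : ℝ) / 3^(i+1), 0)

noncomputable def normAC (x : ℝ) : ℝ := ‖(x : UnitAddCircle)‖

lemma normAC_eq (x : ℝ) : normAC x = |x - round x| := UnitAddCircle.norm_eq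

lemma normAC_add_int (x : ℝ) (m : ℤ) : normAC (x + m) = normAC x := by
  rw [normAC_eq, normAC_eq, round_add_intCast]
  congr 1; push_cast; ring

lemma normAC_neg (x : ℝ) : normAC (-x) = normAC x := by
  unfold normAC
  rw [show ((-x : ℝ) : UnitAddCircle) = -(x : UnitAddCircle) from rfl, norm_neg]

lemma normAC_abs (x : ℝ) (h : |x| ≤ 1/2) : normAC x = |x| := by
  rw [normAC_eq]
  rcases abs_le.mp h with ⟨h1, h2⟩
  by_cases hx : x = 1/2
  · subst hx; norm_num [round_eq]
  · have hx2 : x < 1/2 := lt_of_le_of_ne h2 hx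
    have : round x = 0 := by
      rw [round_eq, Int.floor_eq_zero_iff]
      constructor <;> simp <;> linarith
    simp [this]

lemma normAC_cont : Continuous normAC :=
  continuous_norm.comp (AddCircle.continuous_mk' 1)


noncomputable def xval (α : Cantor) : ℝ := ∑' i : ℕ, 2 * (α i : ℝ) / 3^(i+1)

lemma fin2 (x : Fin 2) : x = 0 ∨ x = 1 := by fin_cases x <;> simp

lemma coef_nonneg (α : Cantor) (i : ℕ) : 0 ≤ 2 * (α i : ℝ) / 3^(i+1) := by positivity

lemma coef_le (α : Cantor) (i : ℕ) : 2 * (α i : ℝ) / 3^(i+1) ≤ (2/3) * (1/3)^i := by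
  have h1 : (α i : ℝ) ≤ 1 := by
    have := (α i).2
    have : (α i : ℕ) ≤ 1 := by omega
    exact_mod_cast this
  have h3 : (0:ℝ) < 3^(i+1) := by positivity
  rw [div_le_iff₀ h3]
  have : ((2:ℝ)/3) * (1/3)^i * 3^(i+1) = 2 := by
    rw [pow_succ]; field_simp; rw [← mul_pow]; norm_num
  rw [this]; nlinarith

lemma summable_geom : Summable (fun i : ℕ => (2/3 : ℝ) * (1/3)^i) :=
  (summable_geometric_of_lt_one (by norm_num) (by norm_num)).mul_left _

lemma tsum_geom : ∑' i : ℕ, (2/3 : ℝ) * (1/3)^i = 1 := by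
  rw [tsum_mul_left, tsum_geometric_of_lt_one (by norm_num) (by norm_num)]
  norm_num

lemma summable_xval (α : Cantor) : Summable (fun i : ℕ => 2 * (α i : ℝ) / 3^(i+1)) :=
  Summable.of_nonneg_of_le (coef_nonneg α) (coef_le α) summable_geom

lemma xval_nonneg (α : Cantor) : 0 ≤ xval α := tsum_nonneg (coef_nonneg α)

lemma xval_le_one (α : Cantor) : xval α ≤ 1 := by
  have := Summable.tsum_le_tsum (coef_le α) (summable_xval α) summable_geom
  rwa [tsum_geom] at this

lemma xval_cmpl (α : Cantor) : xval (cmpl α) = 1 - xval α := by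
  have hadd : ∀ i : ℕ, 2 * ((cmpl α) i : ℝ) / 3^(i+1) + 2 * (α i : ℝ) / 3^(i+1)
      = (2/3 : ℝ) * (1/3)^i := by
    intro i
    have key : ((cmpl α) i : ℝ) + (α i : ℝ) = 1 := by
      rcases fin2 (α i) with h | h <;> simp [cmpl, h]
    have h3 : (0:ℝ) < 3^(i+1) := by positivity
    field_simp
    rw [pow_succ] at *
    nlinarith [key, show (3:ℝ)^i * (1/3)^i = 1 by rw [← mul_pow]; norm_num]
  have := Summable.tsum_add (summable_xval (cmpl α)) (summable_xval α)
  rw [← xval, ← xval] at this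
  have h2 : ∑' i : ℕ, (2 * ((cmpl α) i : ℝ) / 3^(i+1) + 2 * (α i : ℝ) / 3^(i+1)) = 1 := by
    rw [tsum_congr hadd, tsum_geom]
  rw [this] at h2
  linarith

lemma xval_step (α : Cantor) : xval α = 2 * (α 0 : ℝ) / 3 + (1/3) * xval (fun i => α (i+1)) := by
  rw [xval, Summable.tsum_eq_zero_add (summable_xval α)]
  congr 1
  · norm_num
  · rw [xval, ← tsum_mul_left]
    exact tsum_congr fun i => by rw [pow_succ]; ring

lemma xval_shift (α : Cantor) (n : ℕ) :
    ∃ M : ℕ, (3:ℝ)^n * xval α = M + xval (fun i => α (i+n)) := by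
  induction n with
  | zero => exact ⟨0, by simp⟩
  | succ n ih =>
    obtain ⟨M, hM⟩ := ih
    refine ⟨3 * M + 2 * (α n : ℕ), ?_⟩
    have hstep := xval_step (fun i => α (i+n))
    have hcomp : (fun i => α (i+1+n)) = (fun i => α (i+(n+1))) := by
      funext i; congr 1; omega
    rw [hcomp] at hstep
    have : (3:ℝ)^(n+1) * xval α = 3 * ((3:ℝ)^n * xval α) := by ring
    rw [this, hM]
    push_cast
    rw [hstep]
    simp only [Nat.zero_add]
    ring


lemma xval_head_lt {α β : Cantor} (h0 : α 0 = 0) (h1 : β 0 = 1) : xval α < xval β := by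
  have ha := xval_step α
  have hb := xval_step β
  rw [h0] at ha; rw [h1] at hb
  have h2 := xval_le_one (fun i => α (i+1))
  have h3 := xval_nonneg (fun i => β (i+1))
  simp at ha hb
  nlinarith

lemma xval_inj {α β : Cantor} (h : xval α = xval β) : α = β := by
  funext n
  induction n using Nat.strong_induction_on with
  | _ n ih =>
    -- shifted values are equal
    have hsh : ∀ m : ℕ, (∀ i < m, α i = β i) →
        xval (fun i => α (i+m)) = xval (fun i => β (i+m)) := by
      intro m
      induction m with
      | zero => intro _; simpa using h
      | succ m ihm =>
        intro hag
        have h1 := ihm (fun i hi => hag i (Nat.lt_succ_of_lt hi))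
        have ha := xval_step (fun i => α (i+m))
        have hb := xval_step (fun i => β (i+m))
        simp only [Nat.zero_add] at ha hb
        have hcompa : (fun i => α (i+1+m)) = (fun i => α (i+(m+1))) := by
          funext i; congr 1; omega
        have hcompb : (fun i => β (i+1+m)) = (fun i => β (i+(m+1))) := by
          funext i; congr 1; omega
        rw [hcompa] at ha; rw [hcompb] at hb
        rw [hag m (Nat.lt_succ_self m)] at ha
        rw [ha, hb] at h1
        linarith
    have heq := hsh n ih
    by_contra hne
    rcases fin2 (α n) with ha | ha <;> rcases fin2 (β n) with hb | hb
    · exact hne (ha.trans hb.symm)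
    · have := xval_head_lt (α := fun i => α (i+n)) (β := fun i => β (i+n))
        (by simpa using ha) (by simpa using hb)
      linarith
    · have := xval_head_lt (α := fun i => β (i+n)) (β := fun i => α (i+n))
        (by simpa using hb) (by simpa using ha)
      linarith
    · exact hne (ha.trans hb.symm)

lemma final_E0star {α β : Cantor} (N : ℕ)
    (h : normAC ((3:ℝ)^N * xval α - 1/2) = normAC ((3:ℝ)^N * xval β - 1/2)) :
    E0star α β := by
  obtain ⟨M₁, hM₁⟩ := xval_shift α N
  obtain ⟨M₂, hM₂⟩ := xval_shift β N
  set a := xval (fun i => α (i+N)) with hadef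
  set b := xval (fun i => β (i+N)) with hbdef
  have e1 : (3:ℝ)^N * xval α - 1/2 = (a - 1/2) + (M₁ : ℤ) := by
    push_cast; rw [hM₁]; ring
  have e2 : (3:ℝ)^N * xval β - 1/2 = (b - 1/2) + (M₂ : ℤ) := by
    push_cast; rw [hM₂]; ring
  rw [e1, e2, normAC_add_int, normAC_add_int] at h
  have ha0 := xval_nonneg (fun i => α (i+N))
  have ha1 := xval_le_one (fun i => α (i+N))
  have hb0 := xval_nonneg (fun i => β (i+N))
  have hb1 := xval_le_one (fun i => β (i+N))
  rw [normAC_abs _ (by rw [abs_le]; constructor <;> [linarith; linarith]),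
      normAC_abs _ (by rw [abs_le]; constructor <;> [linarith; linarith])] at h
  rcases abs_eq_abs.mp h with h' | h'
  · -- a = b
    have : (fun i => α (i+N)) = (fun i => β (i+N)) := xval_inj (by linarith)
    left
    refine ⟨N, fun n hn => ?_⟩
    have := congrFun this (n - N)
    simpa [Nat.sub_add_cancel hn] using this
  · -- a = 1 - b
    have hc : xval (fun i => α (i+N)) = xval (cmpl (fun i => β (i+N))) := by
      rw [xval_cmpl]; linarith
    have heq := xval_inj hc
    right
    refine ⟨N, fun n hn => ?_⟩
    have := congrFun heq (n - N)
    simp only [cmpl] at this ⊢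
    rw [show n - N + N = n from Nat.sub_add_cancel hn] at this
    exact this


lemma normAC_sub_nat (x : ℝ) (m : ℕ) : normAC (x - m) = normAC x := by
  have h := normAC_add_int (x - m) m
  have h2 : (x - (m:ℕ)) + ((m:ℕ):ℤ) = x := by push_cast; ring
  rw [h2] at h
  simpa using h.symm

lemma preCantorSet_subset (n : ℕ) : preCantorSet n ⊆ Set.Icc 0 1 := by
  induction n with
  | zero => exact le_refl _
  | succ n ih =>
    rintro x (⟨y, hy, rfl⟩ | ⟨y, hy, rfl⟩) <;> obtain ⟨h0, h1⟩ := ih hy <;>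
      constructor <;> simp <;> linarith

lemma pre_symm {n : ℕ} {x : ℝ} (h : x ∈ preCantorSet n) : 1 - x ∈ preCantorSet n := by
  induction n generalizing x with
  | zero => obtain ⟨h0, h1⟩ := h; exact ⟨by linarith, by linarith⟩
  | succ n ih =>
    rcases h with ⟨y, hy, rfl⟩ | ⟨y, hy, rfl⟩
    · exact Or.inr ⟨1 - y, ih hy, by ring⟩
    · exact Or.inl ⟨1 - y, ih hy, by ring⟩

lemma cantor_symm {c : ℝ} (hc : c ∈ cantorSet) : 1 - c ∈ cantorSet := by
  rw [cantorSet, Set.mem_iInter] at hc ⊢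
  exact fun n => pre_symm (hc n)

lemma cantor_step {c : ℝ} (hc : c ∈ cantorSet) :
    3 * c ∈ cantorSet ∨ 3 * c - 2 ∈ cantorSet := by
  have hmem : ∀ n, c ∈ preCantorSet (n + 1) := fun n => (Set.mem_iInter.mp hc (n+1))
  by_cases hc3 : c ≤ 1/3
  · left
    rw [cantorSet, Set.mem_iInter]
    intro n
    rcases hmem n with ⟨y, hy, hyx⟩ | ⟨y, hy, hyx⟩
    · have : 3 * c = y := by simp at hyx; linarith
      rwa [this]
    · obtain ⟨h0, _⟩ := preCantorSet_subset n hy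
      simp at hyx; linarith
  · right
    rw [cantorSet, Set.mem_iInter]
    intro n
    rcases hmem n with ⟨y, hy, hyx⟩ | ⟨y, hy, hyx⟩
    · obtain ⟨_, h1⟩ := preCantorSet_subset n hy
      simp at hyx; linarith
    · have : 3 * c - 2 = y := by simp at hyx; linarith
      rwa [this]

lemma cantor_pow {c : ℝ} (hc : c ∈ cantorSet) (n : ℕ) :
    ∃ (m : ℕ) (c' : ℝ), c' ∈ cantorSet ∧ (3:ℝ)^n * c = m + c' := by
  induction n with
  | zero => exact ⟨0, c, hc, by simp⟩
  | succ n ih =>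
    obtain ⟨m, c', hc', he⟩ := ih
    rcases cantor_step hc' with h | h
    · refine ⟨3 * m, 3 * c', h, ?_⟩
      push_cast
      rw [pow_succ]
      nlinarith [he]
    · refine ⟨3 * m + 2, 3 * c' - 2, h, ?_⟩
      push_cast
      rw [pow_succ]
      nlinarith [he]

lemma pre_len : ∀ n : ℕ, ∀ a b : ℝ, Set.Icc a b ⊆ preCantorSet n → b - a ≤ (1/3)^n := by
  intro n
  induction n with
  | zero =>
    intro a b hsub
    by_cases hab : a ≤ b
    · obtain ⟨h0, h1⟩ := hsub (Set.left_mem_Icc.mpr hab)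
      obtain ⟨h2, h3⟩ := hsub (Set.right_mem_Icc.mpr hab)
      simpa using by linarith
    · push_neg at hab; simpa using by linarith
  | succ n ih =>
    intro a b hsub
    by_cases hab : a ≤ b
    swap
    · push_neg at hab
      have : (0:ℝ) ≤ (1/3)^(n+1) := by positivity
      linarith
    have hmid : ¬ ((1:ℝ)/2 ∈ Set.Icc a b) := by
      intro hm
      rcases hsub hm with ⟨y, hy, hyx⟩ | ⟨y, hy, hyx⟩ <;>
        obtain ⟨h0, h1⟩ := preCantorSet_subset n hy <;> simp at hyx <;> linarith
    rcases hsub (Set.left_mem_Icc.mpr hab) with ⟨y, hy, hyx⟩ | ⟨y, hy, hyx⟩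
    · -- a ∈ left part, a ≤ 1/3
      obtain ⟨hy0, hy1⟩ := preCantorSet_subset n hy
      have ha3 : a ≤ 1/3 := by simp at hyx; linarith
      have hb2 : b < 1/2 := by
        by_contra hb
        push_neg at hb
        exact hmid ⟨by linarith, by linarith⟩
      have hclaim : Set.Icc (3*a) (3*b) ⊆ preCantorSet n := by
        intro z ⟨hz1, hz2⟩
        have hz : z/3 ∈ Set.Icc a b := ⟨by linarith, by linarith⟩
        rcases hsub hz with ⟨w, hw, hwx⟩ | ⟨w, hw, hwx⟩
        · have : z = w := by simp at hwx; linarith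
          rwa [this]
        · obtain ⟨hw0, _⟩ := preCantorSet_subset n hw
          simp at hwx
          -- z/3 = (2+w)/3 ≥ 2/3, but z ≤ 3b < 3/2 so z/3 < 1/2 < 2/3
          linarith
      have := ih (3*a) (3*b) hclaim
      rw [pow_succ]
      linarith
    · -- a ∈ right part, a ≥ 2/3
      obtain ⟨hy0, hy1⟩ := preCantorSet_subset n hy
      have ha3 : 2/3 ≤ a := by simp at hyx; linarith
      have hclaim : Set.Icc (3*a - 2) (3*b - 2) ⊆ preCantorSet n := by
        intro z ⟨hz1, hz2⟩
        have hz : (z+2)/3 ∈ Set.Icc a b := ⟨by linarith, by linarith⟩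
        rcases hsub hz with ⟨w, hw, hwx⟩ | ⟨w, hw, hwx⟩
        · obtain ⟨_, hw1⟩ := preCantorSet_subset n hw
          simp at hwx
          linarith
        · have : z = w := by simp at hwx; linarith
          rwa [this]
      have := ih _ _ hclaim
      rw [pow_succ]
      linarith

lemma cantor_no_Icc {a b : ℝ} (hab : a < b) : ¬ (Set.Icc a b ⊆ cantorSet) := by
  intro hsub
  obtain ⟨n, hn⟩ := exists_pow_lt_of_lt_one (show (0:ℝ) < b - a by linarith)
    (show (1:ℝ)/3 < 1 by norm_num)
  have := pre_len n a b (hsub.trans (Set.iInter_subset _ n))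
  linarith

noncomputable def Tset (N : ℕ) : Set ℝ :=
  (fun c => normAC ((3:ℝ)^N * c - 1/2)) '' cantorSet

lemma Tset_shift {N : ℕ} {x : ℝ} (hx : x ∈ Tset N) : 1/2 + x ∈ cantorSet := by
  obtain ⟨c, hc, rfl⟩ := hx
  show 1/2 + normAC ((3:ℝ)^N * c - 1/2) ∈ cantorSet
  obtain ⟨m, c', hc', he⟩ := cantor_pow hc N
  have h1 : (3:ℝ)^N * c - 1/2 = (c' - 1/2) + (m : ℤ) := by push_cast; linarith
  obtain ⟨h0, hle⟩ := cantorSet_subset_unitInterval hc'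
  rw [h1, normAC_add_int, normAC_abs _ (by rw [abs_le]; constructor <;> linarith)]
  rcases le_or_gt (1/2 : ℝ) c' with h | h
  · rw [abs_of_nonneg (by linarith)]
    have : 1/2 + (c' - 1/2) = c' := by ring
    rwa [this]
  · rw [abs_of_neg (by linarith)]
    have : 1/2 + -(c' - 1/2) = 1 - c' := by ring
    rw [this]
    exact cantor_symm hc'

lemma Tset_no_Icc {N : ℕ} {a b : ℝ} (hab : a < b) : ¬ (Set.Icc a b ⊆ Tset N) := by
  intro hsub
  apply cantor_no_Icc (show 1/2 + a < 1/2 + b by linarith)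
  intro y ⟨hy1, hy2⟩
  have : y - 1/2 ∈ Set.Icc a b := ⟨by linarith, by linarith⟩
  have := Tset_shift (hsub this)
  have h : 1/2 + (y - 1/2) = y := by ring
  rwa [h] at this

lemma nAC_radius (N : ℕ) (a c : ℝ) (m : ℕ) (hm : (3:ℝ)^N * a = m + 1/2) :
    normAC ((3:ℝ)^N * |c - a|) = normAC ((3:ℝ)^N * c - 1/2) := by
  have h3 : (0:ℝ) ≤ (3:ℝ)^N := by positivity
  have h1 : (3:ℝ)^N * |c - a| = |((3:ℝ)^N * c - 1/2) - m| := by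
    have e : ((3:ℝ)^N * c - 1/2) - m = (3:ℝ)^N * (c - a) := by rw [mul_sub]; linarith
    rw [e, abs_mul, abs_of_nonneg h3]
  rcases abs_choice ((3:ℝ)^N * c - 1/2 - m) with h | h
  · rw [h1, h, normAC_sub_nat]
  · rw [h1, h, normAC_neg, normAC_sub_nat]


/- odd helpers -/
lemma half_top (N : ℕ) : ∃ m : ℕ, (3:ℝ)^N * (1/2) = m + 1/2 := by
  obtain ⟨t, ht⟩ := (Odd.pow (by decide : Odd 3) : Odd (3^N))
  refine ⟨t, ?_⟩
  have : ((3^N : ℕ) : ℝ) = 2*t+1 := by rw [ht]; push_cast; ring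
  push_cast at this
  linarith

lemma half_bot (N k : ℕ) (hk : k ≤ N) : ∃ m : ℕ, (3:ℝ)^N * (5/(2*3^k)) = m + 1/2 := by
  obtain ⟨t, ht⟩ := ((by decide : Odd 5).mul (Odd.pow (by decide : Odd 3)) :
    Odd (5 * 3^(N-k)))
  refine ⟨t, ?_⟩
  have h3 : (3:ℝ)^N = 3^(N-k) * 3^k := by rw [← pow_add]; congr 1; omega
  have hc : ((5 * 3^(N-k) : ℕ) : ℝ) = 2*t+1 := by rw [ht]; push_cast; ring
  push_cast at hc
  have hk0 : (0:ℝ) < 3^k := by positivity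
  rw [h3]
  field_simp
  nlinarith [hc]

/- Hset basics -/
lemma Hset_zero_def : Hset 0 =
    {p : ℝ×ℝ | 0 ≤ p.2 ∧ ∃ c ∈ cantorSet, (p.1 - 1/2)^2 + p.2^2 = (c - 1/2)^2} := if_pos rfl

lemma Hset_pos_def {k : ℕ} (hk : k ≠ 0) : Hset k =
    {p : ℝ×ℝ | p.2 ≤ 0 ∧ ∃ c ∈ cantorSet ∩ Set.Icc ((2:ℝ)/3^k) (3/3^k),
      (p.1 - 5/(2*3^k))^2 + p.2^2 = (c - 5/(2*3^k))^2} := if_neg hk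

lemma isClosed_Hset (k : ℕ) : IsClosed (Hset k) := by
  rcases Nat.eq_zero_or_pos k with rfl | hk
  · rw [Hset_zero_def]
    have : {p : ℝ×ℝ | 0 ≤ p.2 ∧ ∃ c ∈ cantorSet, (p.1 - 1/2)^2 + p.2^2 = (c - 1/2)^2}
        = {p : ℝ×ℝ | 0 ≤ p.2} ∩ ((fun p : ℝ×ℝ => (p.1 - 1/2)^2 + p.2^2) ⁻¹'
          ((fun c : ℝ => (c - 1/2)^2) '' cantorSet)) := by
      ext p
      simp only [Set.mem_setOf_eq, Set.mem_inter_iff, Set.mem_preimage, Set.mem_image]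
      constructor
      · rintro ⟨h1, c, hc, he⟩; exact ⟨h1, c, hc, he.symm⟩
      · rintro ⟨h1, c, hc, he⟩; exact ⟨h1, c, hc, he.symm⟩
    rw [this]
    exact (isClosed_le continuous_const continuous_snd).inter
      ((IsClosed.preimage (by fun_prop) (isCompact_cantorSet.image (by fun_prop)).isClosed))
  · rw [Hset_pos_def (Nat.pos_iff_ne_zero.mp hk)]
    have : {p : ℝ×ℝ | p.2 ≤ 0 ∧ ∃ c ∈ cantorSet ∩ Set.Icc ((2:ℝ)/3^k) (3/3^k),
          (p.1 - 5/(2*3^k))^2 + p.2^2 = (c - 5/(2*3^k))^2}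
        = {p : ℝ×ℝ | p.2 ≤ 0} ∩ ((fun p : ℝ×ℝ => (p.1 - 5/(2*3^k))^2 + p.2^2) ⁻¹'
          ((fun c : ℝ => (c - 5/(2*3^k))^2) '' (cantorSet ∩ Set.Icc ((2:ℝ)/3^k) (3/3^k)))) := by
      ext p
      simp only [Set.mem_setOf_eq, Set.mem_inter_iff, Set.mem_preimage, Set.mem_image]
      constructor
      · rintro ⟨h1, c, hc, he⟩; exact ⟨h1, c, hc, he.symm⟩
      · rintro ⟨h1, c, hc, he⟩; exact ⟨h1, c, hc, he.symm⟩
    rw [this]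
    exact (isClosed_le continuous_snd continuous_const).inter
      ((IsClosed.preimage (by fun_prop)
        ((isCompact_cantorSet.inter_right isClosed_Icc).image (by fun_prop)).isClosed))

lemma Icc3_disjoint {j k : ℕ} (hj : 1 ≤ j) (hk : 1 ≤ k) (hjk : j ≠ k) {x : ℝ}
    (hx : x ∈ Set.Icc ((2:ℝ)/3^k) (3/3^k)) : x ∉ Set.Icc ((2:ℝ)/3^j) (3/3^j) := by
  intro hx'
  have key : ∀ a b : ℕ, a < b → (3:ℝ)/3^b < 2/3^a := by
    intro a b hab
    rw [div_lt_div_iff₀ (by positivity) (by positivity)]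
    have h1 : (3:ℝ) * 3^a = 3^(a+1) := by rw [pow_succ]; ring
    have h2 : (3:ℝ)^(a+1) ≤ 3^b := pow_le_pow_right₀ (by norm_num) hab
    have h3 : (0:ℝ) < 3^b := by positivity
    linarith
  obtain ⟨hx1, hx2⟩ := hx
  obtain ⟨hx3, hx4⟩ := hx'
  rcases lt_or_gt_of_ne hjk with h | h
  · have := key j k h; linarith
  · have := key k j h; linarith

lemma Hset_pos_elim {k : ℕ} (hk : k ≠ 0) {p : ℝ×ℝ} (hp : p ∈ Hset k) :
    p.2 ≤ 0 ∧ ∃ c ∈ cantorSet, (p.1 - 5/(2*3^k))^2 + p.2^2 = (c - 5/(2*3^k))^2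
      ∧ 2/3^k ≤ c ∧ c ≤ 3/3^k := by
  rw [Hset_pos_def hk] at hp
  obtain ⟨hy, c, ⟨hcC, hc1, hc2⟩, he⟩ := hp
  exact ⟨hy, c, hcC, he, hc1, hc2⟩

lemma px_mem_Icc {k : ℕ} (hk : k ≠ 0) {p : ℝ×ℝ} (hp : p ∈ Hset k) :
    p.1 ∈ Set.Icc ((2:ℝ)/3^k) (3/3^k) := by
  obtain ⟨hy, c, hcC, he, hc1, hc2⟩ := Hset_pos_elim hk hp
  have h30 : (0:ℝ) < 3^k := by positivity
  have e1 : (5:ℝ)/(2*3^k) - 1/(2*3^k) = 2/3^k := by field_simp; ring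
  have e2 : (5:ℝ)/(2*3^k) + 1/(2*3^k) = 3/3^k := by field_simp; ring
  have hcr : |c - 5/(2*3^k)| ≤ 1/(2*3^k) := by
    rw [abs_le]; constructor <;> linarith
  have hple : |p.1 - 5/(2*3^k)| ≤ |c - 5/(2*3^k)| := by
    have s1 : |p.1 - 5/(2*3^k)| = Real.sqrt ((p.1 - 5/(2*3^k))^2) :=
      (Real.sqrt_sq_eq_abs _).symm
    have s2 : Real.sqrt ((p.1 - 5/(2*3^k))^2) ≤ Real.sqrt ((p.1 - 5/(2*3^k))^2 + p.2^2) :=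
      Real.sqrt_le_sqrt (by nlinarith [sq_nonneg p.2])
    have s3 : Real.sqrt ((p.1 - 5/(2*3^k))^2 + p.2^2) = |c - 5/(2*3^k)| := by
      rw [he, Real.sqrt_sq_eq_abs]
    linarith [s1, s2, s3.le, s3.ge]
  have := hple.trans hcr
  rw [abs_le] at this
  constructor <;> linarith [this.1, this.2]

/- the invariant function -/
noncomputable def Ftop (N : ℕ) (p : ℝ × ℝ) : ℝ :=
  normAC ((3:ℝ)^N * Real.sqrt ((p.1 - 1/2)^2 + p.2^2))
noncomputable def Fbot (N k : ℕ) (p : ℝ × ℝ) : ℝ :=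
  normAC ((3:ℝ)^N * Real.sqrt ((p.1 - 5/(2*3^k))^2 + p.2^2))
noncomputable def Fkn (N : ℕ) (p : ℝ × ℝ) : ℝ :=
  if 0 ≤ p.2 then Ftop N p
  else ∑ k ∈ Finset.Icc 1 N,
    Set.indicator (Set.Icc ((2:ℝ)/3^k) ((3:ℝ)/3^k)) (fun _ => Fbot N k p) p.1

lemma cont_Ftop (N : ℕ) : Continuous (Ftop N) := by
  apply normAC_cont.comp; fun_prop

lemma cont_Fbot (N k : ℕ) : Continuous (Fbot N k) := by
  apply normAC_cont.comp; fun_prop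

lemma Fkn_eq_Ftop {N : ℕ} : Set.EqOn (Fkn N) (Ftop N) (Hset 0) := by
  intro p hp
  rw [Hset_zero_def] at hp
  exact if_pos hp.1

lemma Fkn_eq_Fbot {N k : ℕ} (hk1 : 1 ≤ k) (hkN : k ≤ N) :
    Set.EqOn (Fkn N) (Fbot N k) (Hset k) := by
  intro p hp
  have hk0 : k ≠ 0 := by omega
  have hpx := px_mem_Icc hk0 hp
  obtain ⟨hy, c, hcC, he, hc1, hc2⟩ := Hset_pos_elim hk0 hp
  by_cases h02 : 0 ≤ p.2
  · have hy0 : p.2 = 0 := le_antisymm hy h02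
    rw [Fkn, if_pos h02, Ftop, Fbot, hy0]
    have e1 : Real.sqrt ((p.1 - 1/2)^2 + 0^2) = |p.1 - 1/2| := by
      rw [show (p.1 - 1/2)^2 + 0^2 = (p.1 - 1/2)^2 by ring, Real.sqrt_sq_eq_abs]
    have e2 : Real.sqrt ((p.1 - 5/(2*3^k))^2 + 0^2) = |p.1 - 5/(2*3^k)| := by
      rw [show (p.1 - 5/(2*3^k))^2 + 0^2 = (p.1 - 5/(2*3^k))^2 by ring, Real.sqrt_sq_eq_abs]
    rw [e1, e2]
    obtain ⟨m1, hm1⟩ := half_top N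
    obtain ⟨m2, hm2⟩ := half_bot N k hkN
    rw [nAC_radius N (1/2) p.1 m1 hm1, nAC_radius N (5/(2*3^k)) p.1 m2 hm2]
  · rw [Fkn, if_neg h02]
    rw [Finset.sum_eq_single_of_mem k (Finset.mem_Icc.mpr ⟨hk1, hkN⟩)]
    · exact Set.indicator_of_mem hpx _
    · intro j hj hjk
      exact Set.indicator_of_notMem
        (Icc3_disjoint (Finset.mem_Icc.mp hj).1 hk1 hjk hpx) _

lemma Fkn_mem_Tset {N k : ℕ} (hkN : k ≤ N) {p : ℝ×ℝ} (hp : p ∈ Hset k) :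
    Fkn N p ∈ Tset N := by
  rcases Nat.eq_zero_or_pos k with rfl | hk1
  · have hp' := hp
    rw [Hset_zero_def] at hp'
    obtain ⟨hy, c, hc, heq⟩ := hp'
    rw [Fkn_eq_Ftop hp, Ftop]
    have e : Real.sqrt ((p.1 - 1/2)^2 + p.2^2) = |c - 1/2| := by
      rw [heq, Real.sqrt_sq_eq_abs]
    rw [e]
    obtain ⟨m, hm⟩ := half_top N
    exact ⟨c, hc, (nAC_radius N (1/2) c m hm).symm⟩
  · have hk0 : k ≠ 0 := by omega
    obtain ⟨hy, c, hcC, he, hc1, hc2⟩ := Hset_pos_elim hk0 hp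
    rw [Fkn_eq_Fbot hk1 hkN hp, Fbot]
    have e : Real.sqrt ((p.1 - 5/(2*3^k))^2 + p.2^2) = |c - 5/(2*3^k)| := by
      rw [he, Real.sqrt_sq_eq_abs]
    rw [e]
    obtain ⟨m, hm⟩ := half_bot N k hkN
    exact ⟨c, hcC, (nAC_radius N (5/(2*3^k)) c m hm).symm⟩

lemma cwa_biUnion {f : ℝ×ℝ → ℝ} {p : ℝ×ℝ} (t : Finset ℕ) (s : ℕ → Set (ℝ×ℝ))
    (h : ∀ k ∈ t, ContinuousWithinAt f (s k) p) :
    ContinuousWithinAt f (⋃ k ∈ t, s k) p := by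
  classical
  induction t using Finset.induction_on with
  | empty =>
    have : (⋃ k ∈ (∅ : Finset ℕ), s k) = ∅ := by simp
    rw [this]
    unfold ContinuousWithinAt
    rw [nhdsWithin_empty]
    exact Filter.tendsto_bot
  | insert a t' hx ih =>
    rw [Finset.set_biUnion_insert]
    exact (h a (Finset.mem_insert_self a t')).union
      (ih fun k hk => h k (Finset.mem_insert_of_mem hk))

lemma contOn_Fkn (N : ℕ) : ContinuousOn (Fkn N) (⋃ k ∈ Finset.range (N+1), Hset k) := by
  intro p _
  apply cwa_biUnion
  intro k hkmem
  have hkN : k ≤ N := by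
    have := Finset.mem_range.mp hkmem; omega
  by_cases hpk : p ∈ Hset k
  · rcases Nat.eq_zero_or_pos k with rfl | hk1
    · exact ((cont_Ftop N).continuousWithinAt).congr
        (fun q hq => Fkn_eq_Ftop hq) (Fkn_eq_Ftop hpk)
    · exact ((cont_Fbot N k).continuousWithinAt).congr
        (fun q hq => Fkn_eq_Fbot hk1 hkN hq) (Fkn_eq_Fbot hk1 hkN hpk)
  · exact continuousWithinAt_of_notMem_closure
      (by rwa [(isClosed_Hset k).closure_eq])

lemma Fkn_psi (N : ℕ) (α : Cantor) :
    Fkn N (psi α) = normAC ((3:ℝ)^N * xval α - 1/2) := by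
  have h2 : (psi α).2 = 0 := rfl
  have h1 : (psi α).1 = xval α := rfl
  rw [Fkn, h2, if_pos le_rfl, Ftop, h1, h2]
  rw [show (xval α - 1/2)^2 + (0:ℝ)^2 = (xval α - 1/2)^2 by ring, Real.sqrt_sq_eq_abs]
  obtain ⟨m, hm⟩ := half_top N
  exact nAC_radius N (1/2) (xval α) m hm


/-- Any path in `H` from `ψ α` to `ψ β` with `α, β` not `E₀*`-equivalent
meets infinitely many of the pieces `Hₖ`. -/
theorem path_meets_infinitely_many_Hset :
    ∀ α β : Cantor, ¬ E0star α β →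
      ∀ γ : ↥unitInterval → ℝ × ℝ, Continuous γ → Set.range γ ⊆ knasterH →
        γ 0 = psi α → γ 1 = psi β →
        {k : ℕ | (Set.range γ ∩ Hset k).Nonempty}.Infinite := by
  intro α β hne γ hγc hγH hγ0 hγ1
  by_contra hinf
  rw [Set.not_infinite] at hinf
  set N := hinf.toFinset.sup id with hN
  have hmemK : ∀ t, γ t ∈ ⋃ k ∈ Finset.range (N+1), Hset k := by
    intro t
    have hh := hγH (Set.mem_range_self t)
    rw [knasterH, Set.mem_iUnion] at hh
    obtain ⟨k, hk⟩ := hh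
    have hkS : k ∈ {k : ℕ | (Set.range γ ∩ Hset k).Nonempty} :=
      ⟨γ t, Set.mem_range_self t, hk⟩
    have hkN : k ≤ N := Finset.le_sup (f := id) (hinf.mem_toFinset.mpr hkS)
    exact Set.mem_biUnion (Finset.mem_range.mpr (Nat.lt_succ_of_le hkN)) hk
  have hcont : Continuous (Fkn N ∘ γ) :=
    (contOn_Fkn N).comp_continuous hγc hmemK
  have himg : Set.range (Fkn N ∘ γ) ⊆ Tset N := by
    rintro x ⟨t, rfl⟩
    have := hmemK t
    rw [Set.mem_iUnion₂] at this
    obtain ⟨k, hk, hmem⟩ := this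
    exact Fkn_mem_Tset (Nat.lt_succ_iff.mp (Finset.mem_range.mp hk)) hmem
  have hend : (Fkn N ∘ γ) 0 = (Fkn N ∘ γ) 1 := by
    by_contra hne2
    rcases lt_or_gt_of_ne hne2 with h | h
    · exact Tset_no_Icc h
        (((isPreconnected_range hcont).Icc_subset ⟨0, rfl⟩ ⟨1, rfl⟩).trans himg)
    · exact Tset_no_Icc h
        (((isPreconnected_range hcont).Icc_subset ⟨1, rfl⟩ ⟨0, rfl⟩).trans himg)
  have hval : normAC ((3:ℝ)^N * xval α - 1/2) = normAC ((3:ℝ)^N * xval β - 1/2) := by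
    have e0 : (Fkn N ∘ γ) 0 = Fkn N (psi α) := by rw [Function.comp_apply, hγ0]
    have e1 : (Fkn N ∘ γ) 1 = Fkn N (psi β) := by rw [Function.comp_apply, hγ1]
    rw [e0, e1, Fkn_psi, Fkn_psi] at hend
    exact hend
  exact hne (final_E0star N hval)
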